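/- Let K be a field, O a valuation subring of K with maximal ideal M, and G a subgroup of the multiplicative group K^×. Suppose there is a positive integer n with (K^×)^n ⊆ G, and that either the residue field O/M has characteristic 0 or n is coprime to the characteristic of O/M. Then O is compatible with G (i.e., 1 + M ⊆ G) if and only if O is weakly compatible with G (i.e., there is an ideal A of O with radical √A = M and 1 + A ⊆ G). -/

import Mathlib

private lemma one_add_pow_aux {R : Type*} [CommRing R] (y : R) (n : ℕ) :
    ∃ s : R, (1 + y) ^ n = 1 + n * y + y ^ 2 * s := by
  induction n with
  | zero => exact ⟨0, by ring⟩
  | succ n ih =>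
    obtain ⟨s, hs⟩ := ih
    refine ⟨(n : R) + s + y * s, ?_⟩
    rw [pow_succ, hs]
    push_cast
    ring

private lemma key_lemma {K : Type*} [Field K] (O : ValuationSubring K) (G : Subgroup Kˣ)
    (n : ℕ) (hpow : ∀ x : Kˣ, x ^ n ∈ G)
    (hnu : IsUnit (n : O)) (A : Ideal O) (hAne : A ≠ ⊤)
    (hA : ∀ a ∈ A, ∃ u ∈ G, (u : K) = 1 + (a : K)) :
    ∀ k : ℕ, ∀ m : O, m ∈ IsLocalRing.maximalIdeal O → m ^ k ∈ A →
      ∃ u ∈ G, (u : K) = 1 + (m : K) := by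
  intro k
  induction k using Nat.strong_induction_on with
  | _ k ih =>
    intro m hm hmk
    match k, hmk with
    | 0, hmk =>
      exfalso
      exact hAne (Ideal.eq_top_of_isUnit_mem A hmk (by simp))
    | 1, hmk => exact hA m (by simpa using hmk)
    | (k + 2), hmk =>
      -- n is a unit in O, with inverse c
      obtain ⟨cu, hcu⟩ := hnu
      set c : O := ↑cu⁻¹ with hc
      have hnc : (n : O) * c = 1 := by rw [← hcu, hc, Units.mul_inv]
      -- binomial expansion
      obtain ⟨s, hs⟩ := one_add_pow_aux (c * m) n
      -- 1 + m is a unit in O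
      have h1m : IsUnit (1 + m) := by
        rw [← IsLocalRing.notMem_maximalIdeal]
        intro h
        have : (1 : O) ∈ IsLocalRing.maximalIdeal O := by
          have := Ideal.sub_mem _ h hm
          simpa using this
        exact (IsLocalRing.maximalIdeal.isMaximal O).ne_top (Ideal.eq_top_of_isUnit_mem _ this (by simp))
      obtain ⟨p, hp⟩ := h1m
      set t : O := c ^ 2 * s * ↑p⁻¹ with ht
      set w : O := m ^ 2 * t with hw
      -- key identity: (1 + c*m)^n = (1+m) * (1+w)
      have hkey : (1 + c * m) ^ n = (1 + m) * (1 + w) := by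
        have hpinv : (↑p : O) * ↑p⁻¹ = 1 := Units.mul_inv p
        rw [hs, hw, ht]
        have : (n : O) * (c * m) = m := by
          rw [← mul_assoc, hnc, one_mul]
        rw [this]
        calc 1 + m + (c * m) ^ 2 * s
            = 1 + m + m ^ 2 * (c ^ 2 * s) * ((↑p : O) * ↑p⁻¹) := by rw [hpinv]; ring
          _ = 1 + m + (1 + m) * (m ^ 2 * (c ^ 2 * s * ↑p⁻¹)) := by rw [hp]; ring
          _ = (1 + m) * (1 + m ^ 2 * (c ^ 2 * s * ↑p⁻¹)) := by ring
      -- w is in the maximal ideal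
      have hwm : w ∈ IsLocalRing.maximalIdeal O :=
        Ideal.mul_mem_right _ _ (Ideal.pow_mem_of_mem _ hm 2 (by norm_num))
      -- w ^ (k+1) ∈ A
      have hwk : w ^ (k + 1) ∈ A := by
        have : w ^ (k + 1) = m ^ (k + 2) * (m ^ k * t ^ (k + 1)) := by
          rw [hw]; ring
        rw [this]
        exact Ideal.mul_mem_right _ _ hmk
      -- inductive hypothesis on w
      obtain ⟨u₂, hu₂G, hu₂⟩ := ih (k + 1) (by omega) w hwm hwk
      -- 1 + c*m is a unit in O, hence nonzero in K
      have hvu : IsUnit (1 + c * m) := by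
        rw [← IsLocalRing.notMem_maximalIdeal]
        intro h
        have : (1 : O) ∈ IsLocalRing.maximalIdeal O := by
          have := Ideal.sub_mem _ h (Ideal.mul_mem_left _ c hm)
          simpa using this
        exact (IsLocalRing.maximalIdeal.isMaximal O).ne_top
          (Ideal.eq_top_of_isUnit_mem _ this (by simp))
      have hvne : ((1 + c * m : O) : K) ≠ 0 := by
        intro h
        have : (1 + c * m : O) = 0 := by exact_mod_cast h
        rw [this] at hvu
        exact hvu.ne_zero rfl
      set v : Kˣ := Units.mk0 _ hvne with hv
      refine ⟨v ^ n * u₂⁻¹, mul_mem (hpow v) (inv_mem hu₂G), ?_⟩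
      have hKkey : (1 + (c : K) * (m : K)) ^ n = (1 + (m : K)) * (1 + (w : K)) := by
        exact_mod_cast congrArg (fun x : O => (x : K)) hkey
      have hwne : (1 : K) + (w : K) ≠ 0 := by
        rw [← hu₂]; exact u₂.ne_zero
      push_cast
      rw [hv]
      field_simp
      rw [hu₂]
      simp only [Units.val_mk0]; push_cast; linear_combination hKkey

theorem compatible_iff_weakly_compatible_of_pow_subset
    {K : Type*} [Field K] (O : ValuationSubring K) (G : Subgroup Kˣ)
    (n : ℕ) (hn : 0 < n) (hpow : ∀ x : Kˣ, x ^ n ∈ G)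
    (hchar : ∀ q : ℕ, CharP (IsLocalRing.ResidueField O) q → (q = 0 ∨ Nat.Coprime n q)) :
    (∀ m : O, m ∈ IsLocalRing.maximalIdeal O → ∃ u ∈ G, (u : K) = 1 + (m : K)) ↔
      ∃ A : Ideal O, A.radical = IsLocalRing.maximalIdeal O ∧
        ∀ a ∈ A, ∃ u ∈ G, (u : K) = 1 + (a : K) := by
  constructor
  · intro h
    exact ⟨IsLocalRing.maximalIdeal O,
      ((IsLocalRing.maximalIdeal.isMaximal O).isPrime).radical, h⟩
  · rintro ⟨A, hrad, hA⟩
    -- n is a unit in O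
    have hnu : IsUnit (n : O) := by
      rw [← IsLocalRing.notMem_maximalIdeal]
      intro hmem
      have h0 : ((n : ℕ) : IsLocalRing.ResidueField O) = 0 := by
        have : IsLocalRing.residue O (n : O) = 0 :=
          (Ideal.Quotient.eq_zero_iff_mem).mpr hmem
        rw [← this]
        simp [map_natCast]
      set q := ringChar (IsLocalRing.ResidueField O) with hq
      have hqdvd : q ∣ n := (CharP.cast_eq_zero_iff _ q n).mp h0
      rcases hchar q (ringChar.charP _) with h1 | h2
      · rw [h1] at hqdvd
        omega
      · have : q ∣ Nat.gcd n q := Nat.dvd_gcd hqdvd dvd_rfl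
        rw [Nat.Coprime] at h2
        rw [h2] at this
        have hq1 : q = 1 := Nat.dvd_one.mp this
        exact CharP.char_ne_one (IsLocalRing.ResidueField O) q hq1
    have hAne : A ≠ ⊤ := by
      intro h
      rw [h, Ideal.radical_top] at hrad
      exact (IsLocalRing.maximalIdeal.isMaximal O).ne_top hrad.symm
    intro m hm
    have hmr := hm
    rw [← hrad] at hmr
    obtain ⟨k, hk⟩ := hmr
    exact key_lemma O G n hpow hnu A hAne hA k m hm hk
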